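/- Nonregular decoupling feedback (Theorem 2.9). Let A ∈ ℝ^{n×n}, B ∈ ℝ^{n×m}, C ∈ ℝ^{p×n} with p < m, such that every relative order d_i exists (d_i ≤ n and C_i A^{d_i−1} B ≠ 0). Suppose rank B* = p and the submatrix B̄* ∈ ℝ^{p×p} formed by the first p columns of B* is invertible; write B̃* ∈ ℝ^{p×(m−p)} for the matrix of the remaining m−p columns of B*. For an arbitrary matrix K₂ ∈ ℝ^{(m−p)×n}, define F ∈ ℝ^{m×n} as the block-stack of −(B̄*)⁻¹(A* + B̃* K₂) on top of K₂, and G ∈ ℝ^{m×p} as the block-stack of (B̄*)⁻¹ on top of the zero matrix. Then over ℝ(s) the closed-loop transfer function C (sI − A − BF)⁻¹ B G equals diag(s^{−d_1}, …, s^{−d_p}). -/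

import Mathlib

noncomputable section
open Matrix

/-- Entrywise embedding of a real matrix into matrices over the field ℝ(s). -/
noncomputable def toRat {k l : ℕ} (M : Matrix (Fin k) (Fin l) ℝ) :
    Matrix (Fin k) (Fin l) (RatFunc ℝ) :=
  M.map (algebraMap ℝ (RatFunc ℝ))

/-- The matrix `s I - M` over ℝ(s). -/
noncomputable def sIm {k : ℕ} (M : Matrix (Fin k) (Fin k) ℝ) :
    Matrix (Fin k) (Fin k) (RatFunc ℝ) :=
  Matrix.scalar (Fin k) (RatFunc.X : RatFunc ℝ) - toRat M

lemma aux_sum_split {M : Type*} [AddCommMonoid M] {m p : ℕ} (h : p ≤ m) (g : Fin m → M) :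
    ∑ k : Fin m, g k = (∑ a : Fin p, g (Fin.castLE h a)) +
      ∑ b : Fin (m - p), g ⟨p + (b : ℕ), by omega⟩ := by
  have hm : p + (m - p) = m := by omega
  rw [← (finCongr hm).sum_comp g, Fin.sum_univ_add]
  congr 1

lemma aux_algRR (r : ℝ) :
    algebraMap (Polynomial ℝ) (RatFunc ℝ) (Polynomial.C r) = algebraMap ℝ (RatFunc ℝ) r := by
  rw [RatFunc.algebraMap_C]; rfl

lemma aux_sIm_eq_charmatrix {k : ℕ} (M : Matrix (Fin k) (Fin k) ℝ) :
    sIm M = (charmatrix M).map (algebraMap (Polynomial ℝ) (RatFunc ℝ)) := by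
  ext i j
  by_cases h : i = j
  · subst h
    simp [sIm, toRat, charmatrix_apply_eq, scalar_apply, RatFunc.algebraMap_X, aux_algRR]
  · simp [sIm, toRat, charmatrix_apply_ne _ _ _ h, scalar_apply, diagonal_apply_ne _ h, aux_algRR]

lemma aux_isUnit_det_sIm {k : ℕ} (M : Matrix (Fin k) (Fin k) ℝ) : IsUnit (sIm M).det := by
  rw [aux_sIm_eq_charmatrix, ← RingHom.mapMatrix_apply, ← RingHom.map_det]
  rw [isUnit_iff_ne_zero]
  intro h
  have h2 : (algebraMap (Polynomial ℝ) (RatFunc ℝ)) M.charpoly = 0 := h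
  exact M.charpoly_monic.ne_zero
    ((map_eq_zero_iff _ (IsFractionRing.injective (Polynomial ℝ) (RatFunc ℝ))).mp h2)

/-- Auxiliary matrix with rows `∑_{k<dᵢ} s^{dᵢ-1-k} Cᵢ Acl^k`. -/
noncomputable def Nmat {p n : ℕ} (d : Fin p → ℕ) (C : Matrix (Fin p) (Fin n) ℝ)
    (Acl : Matrix (Fin n) (Fin n) ℝ) : Matrix (Fin p) (Fin n) (RatFunc ℝ) :=
  Matrix.of fun i l => ∑ k ∈ Finset.range (d i),
    (RatFunc.X : RatFunc ℝ) ^ (d i - 1 - k) * algebraMap ℝ (RatFunc ℝ) ((C * Acl ^ k) i l)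

lemma aux_stepI {p n : ℕ} (d : Fin p → ℕ) (C : Matrix (Fin p) (Fin n) ℝ)
    (Acl : Matrix (Fin n) (Fin n) ℝ)
    (hzero : ∀ i l, (C * Acl ^ d i) i l = 0) :
    Nmat d C Acl * sIm Acl =
      Matrix.diagonal (fun i => (RatFunc.X : RatFunc ℝ) ^ d i) * toRat C := by
  ext i l
  rw [Matrix.mul_apply, Matrix.diagonal_mul]
  have hsIm : ∀ t, sIm Acl t l =
      (if t = l then (RatFunc.X : RatFunc ℝ) else 0) - algebraMap ℝ (RatFunc ℝ) (Acl t l) := by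
    intro t
    simp [sIm, toRat, scalar_apply, diagonal_apply, Matrix.sub_apply, map_apply,
      RatFunc.algebraMap_eq_C]
  have h1 : ∑ t, Nmat d C Acl i t * sIm Acl t l =
      (Nmat d C Acl i l * RatFunc.X) -
        ∑ t, Nmat d C Acl i t * algebraMap ℝ (RatFunc ℝ) (Acl t l) := by
    have e : ∀ t ∈ Finset.univ, Nmat d C Acl i t * sIm Acl t l =
        Nmat d C Acl i t * (if t = l then (RatFunc.X : RatFunc ℝ) else 0)
          - Nmat d C Acl i t * algebraMap ℝ (RatFunc ℝ) (Acl t l) := fun t _ => by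
      rw [hsIm t, mul_sub]
    rw [Finset.sum_congr rfl e, Finset.sum_sub_distrib]
    congr 1
    simp [mul_ite, mul_zero, Finset.sum_ite_eq']
  rw [h1]
  have h2 : Nmat d C Acl i l * RatFunc.X =
      ∑ k ∈ Finset.range (d i),
        (RatFunc.X : RatFunc ℝ) ^ (d i - k) * algebraMap ℝ (RatFunc ℝ) ((C * Acl ^ k) i l) := by
    rw [Nmat, Matrix.of_apply, Finset.sum_mul]
    refine Finset.sum_congr rfl fun k hk => ?_
    rw [mul_right_comm, ← pow_succ]
    have : d i - 1 - k + 1 = d i - k := by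
      have := Finset.mem_range.mp hk; omega
    rw [this]
  have h3 : ∑ t, Nmat d C Acl i t * algebraMap ℝ (RatFunc ℝ) (Acl t l) =
      ∑ k ∈ Finset.range (d i),
        (RatFunc.X : RatFunc ℝ) ^ (d i - 1 - k) *
          algebraMap ℝ (RatFunc ℝ) ((C * Acl ^ (k + 1)) i l) := by
    simp only [Nmat, Matrix.of_apply, Finset.sum_mul]
    rw [Finset.sum_comm]
    refine Finset.sum_congr rfl fun k _ => ?_
    rw [pow_succ, ← Matrix.mul_assoc, Matrix.mul_apply, map_sum, Finset.mul_sum]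
    exact Finset.sum_congr rfl fun t _ => by rw [_root_.map_mul]; ring
  rw [h2, h3, ← Finset.sum_sub_distrib]
  have h4 : ∀ k ∈ Finset.range (d i),
      (RatFunc.X : RatFunc ℝ) ^ (d i - k) * algebraMap ℝ (RatFunc ℝ) ((C * Acl ^ k) i l)
        - (RatFunc.X : RatFunc ℝ) ^ (d i - 1 - k) *
            algebraMap ℝ (RatFunc ℝ) ((C * Acl ^ (k + 1)) i l)
      = (fun j => (RatFunc.X : RatFunc ℝ) ^ (d i - j) *
            algebraMap ℝ (RatFunc ℝ) ((C * Acl ^ j) i l)) k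
        - (fun j => (RatFunc.X : RatFunc ℝ) ^ (d i - j) *
            algebraMap ℝ (RatFunc ℝ) ((C * Acl ^ j) i l)) (k + 1) := by
    intro k _
    have : d i - (k + 1) = d i - 1 - k := by omega
    simp only [this]
  rw [Finset.sum_congr rfl h4, Finset.sum_range_sub']
  rw [hzero i l, map_zero, mul_zero, sub_zero, Nat.sub_zero, pow_zero, Matrix.mul_one]
  simp [toRat, map_apply]

lemma aux_stepII {p n m : ℕ} (d : Fin p → ℕ) (hd1 : ∀ i, 1 ≤ d i)
    (C : Matrix (Fin p) (Fin n) ℝ) (A Acl : Matrix (Fin n) (Fin n) ℝ)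
    (B : Matrix (Fin n) (Fin m) ℝ) (G : Matrix (Fin m) (Fin p) ℝ)
    (hrow : ∀ i (k : ℕ), k < d i → ∀ t, (C * Acl ^ k) i t = (C * A ^ k) i t)
    (hsmall : ∀ i (k : ℕ), k + 1 < d i → ∀ l, (C * A ^ k * B) i l = 0)
    (hlast : ∀ i j, (C * A ^ (d i - 1) * B * G) i j = (1 : Matrix (Fin p) (Fin p) ℝ) i j) :
    Nmat d C Acl * (toRat B * toRat G) = 1 := by
  have hBG : toRat B * toRat G = toRat (B * G) := by
    rw [toRat, toRat, toRat, Matrix.map_mul]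
  rw [hBG]
  ext i j
  rw [Matrix.mul_apply]
  have h1 : ∑ t, Nmat d C Acl i t * toRat (B * G) t j =
      ∑ k ∈ Finset.range (d i), (RatFunc.X : RatFunc ℝ) ^ (d i - 1 - k) *
        algebraMap ℝ (RatFunc ℝ) ((C * Acl ^ k * (B * G)) i j) := by
    simp only [Nmat, Matrix.of_apply, Finset.sum_mul]
    rw [Finset.sum_comm]
    refine Finset.sum_congr rfl fun k _ => ?_
    rw [Matrix.mul_apply, map_sum, Finset.mul_sum]
    exact Finset.sum_congr rfl fun t _ => by
      rw [_root_.map_mul]; simp [toRat, Matrix.map_apply]; ring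
  rw [h1]
  have hmem : d i - 1 ∈ Finset.range (d i) := by
    rw [Finset.mem_range]; have := hd1 i; omega
  rw [Finset.sum_eq_single_of_mem _ hmem]
  · have e1 : (C * Acl ^ (d i - 1) * (B * G)) i j = (C * A ^ (d i - 1) * B * G) i j := by
      rw [Matrix.mul_apply, Matrix.mul_assoc (C * A ^ (d i - 1)), Matrix.mul_apply]
      exact Finset.sum_congr rfl fun t _ => by rw [hrow i _ (by have := hd1 i; omega) t]
    rw [e1, Nat.sub_self, pow_zero, one_mul, hlast]
    simp [Matrix.one_apply, apply_ite]
  · intro k hk hne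
    have hk' := Finset.mem_range.mp hk
    have e1 : (C * Acl ^ k * (B * G)) i j = 0 := by
      rw [Matrix.mul_apply]
      have e2 : ∀ t ∈ Finset.univ, (C * Acl ^ k) i t * (B * G) t j
          = (C * A ^ k) i t * (B * G) t j := fun t _ => by rw [hrow i k hk' t]
      rw [Finset.sum_congr rfl e2, ← Matrix.mul_apply, Matrix.mul_assoc C,
        ← Matrix.mul_assoc, ← Matrix.mul_assoc, Matrix.mul_apply]
      refine Finset.sum_eq_zero fun t _ => ?_
      rw [hsmall i k (by omega) t, zero_mul]
    rw [e1, map_zero, mul_zero]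

/-- Nonregular decoupling feedback (Theorem 2.9): `p < m`, each relative order
`d i` exists, `rank B* = p`, the first `p` columns `B̄*` of `B*` form an invertible
matrix, `B̃*` collects the remaining `m - p` columns.  For any `K₂`, with
`F = [-(B̄*)⁻¹ (A* + B̃* K₂); K₂]` and `G = [(B̄*)⁻¹; 0]`, the closed-loop
transfer function equals `diag (s^{-d 1}, …, s^{-d p})`. -/
theorem nonregular_decoupling_feedback
    (n m p : ℕ) (hpm : p < m)
    (A : Matrix (Fin n) (Fin n) ℝ) (B : Matrix (Fin n) (Fin m) ℝ)
    (C : Matrix (Fin p) (Fin n) ℝ) (d : Fin p → ℕ)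
    (hd1 : ∀ i, 1 ≤ d i) (hdn : ∀ i, d i ≤ n)
    (hdne : ∀ i, (fun j => (C * A ^ (d i - 1) * B) i j) ≠ 0)
    (hdmin : ∀ i, ∀ j, 1 ≤ j → j < d i → (fun l => (C * A ^ (j - 1) * B) i l) = 0)
    (Bstar : Matrix (Fin p) (Fin m) ℝ)
    (hBstar : Bstar = Matrix.of fun i j => (C * A ^ (d i - 1) * B) i j)
    (Astar : Matrix (Fin p) (Fin n) ℝ)
    (hAstar : Astar = Matrix.of fun i j => (C * A ^ (d i)) i j)
    (hrank : Bstar.rank = p)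
    (Bbar : Matrix (Fin p) (Fin p) ℝ)
    (hBbar : Bbar = Matrix.of fun i (j : Fin p) => Bstar i (Fin.castLE hpm.le j))
    (hBbarInv : IsUnit Bbar.det)
    (Btilde : Matrix (Fin p) (Fin (m - p)) ℝ)
    (hBtilde : Btilde = Matrix.of fun i (j : Fin (m - p)) =>
      Bstar i ⟨p + (j : ℕ), by have := j.isLt; omega⟩)
    (K₂ : Matrix (Fin (m - p)) (Fin n) ℝ)
    (F : Matrix (Fin m) (Fin n) ℝ)
    (hF : F = Matrix.of fun (k : Fin m) l =>
      if h : (k : ℕ) < p then (-(Bbar⁻¹ * (Astar + Btilde * K₂))) ⟨(k : ℕ), h⟩ l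
      else K₂ ⟨(k : ℕ) - p, by have := k.isLt; omega⟩ l)
    (G : Matrix (Fin m) (Fin p) ℝ)
    (hG : G = Matrix.of fun (k : Fin m) j =>
      if h : (k : ℕ) < p then Bbar⁻¹ ⟨(k : ℕ), h⟩ j else 0) :
    toRat C * (sIm (A + B * F))⁻¹ * toRat B * toRat G =
      Matrix.diagonal fun i => ((RatFunc.X : RatFunc ℝ) ^ d i)⁻¹ := by
  set Acl := A + B * F with hAcl
  have hsmall : ∀ i (k : ℕ), k + 1 < d i → ∀ l, (C * A ^ k * B) i l = 0 := by
    intro i k hk l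
    have h := congrFun (hdmin i (k + 1) (by omega) hk) l
    simpa using h
  have hBbar1 : Bbar * Bbar⁻¹ = 1 := Matrix.mul_nonsing_inv _ hBbarInv
  have hBF : Bstar * F = -Astar := by
    have key : Bbar * -(Bbar⁻¹ * (Astar + Btilde * K₂)) = -(Astar + Btilde * K₂) := by
      rw [Matrix.mul_neg, ← Matrix.mul_assoc, hBbar1, Matrix.one_mul]
    ext i j
    rw [Matrix.mul_apply, aux_sum_split hpm.le]
    have e1 : ∀ a : Fin p, Bstar i (Fin.castLE hpm.le a) * F (Fin.castLE hpm.le a) j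
        = Bbar i a * (-(Bbar⁻¹ * (Astar + Btilde * K₂))) a j := by
      intro a
      rw [hF, hBbar]
      simp [Matrix.of_apply, a.isLt]
    have e2 : ∀ b : Fin (m - p),
        Bstar i ⟨p + (b : ℕ), by omega⟩ * F ⟨p + (b : ℕ), by omega⟩ j
        = Btilde i b * K₂ b j := by
      intro b
      have hb : ¬ ((p + (b : ℕ)) < p) := by omega
      have hidx : ∀ (h : p + (b : ℕ) - p < m - p),
          (⟨p + (b : ℕ) - p, h⟩ : Fin (m - p)) = b := by
        intro h; ext; simp
      rw [hF, hBtilde]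
      simp only [Matrix.of_apply, hb, dif_neg, not_false_iff]
      rw [hidx]
    calc (∑ a : Fin p, Bstar i (Fin.castLE hpm.le a) * F (Fin.castLE hpm.le a) j) +
          ∑ b : Fin (m - p), Bstar i ⟨p + (b : ℕ), by omega⟩ * F ⟨p + (b : ℕ), by omega⟩ j
        = (∑ a : Fin p, Bbar i a * (-(Bbar⁻¹ * (Astar + Btilde * K₂))) a j) +
          ∑ b : Fin (m - p), Btilde i b * K₂ b j := by
          rw [Finset.sum_congr rfl fun a _ => e1 a, Finset.sum_congr rfl fun b _ => e2 b]
      _ = (Bbar * -(Bbar⁻¹ * (Astar + Btilde * K₂))) i j + (Btilde * K₂) i j := by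
          rw [Matrix.mul_apply, Matrix.mul_apply]
      _ = (-Astar) i j := by
          rw [key]
          simp [Matrix.add_apply, Matrix.neg_apply]
  have hBGmat : Bstar * G = 1 := by
    ext i j
    rw [Matrix.mul_apply, aux_sum_split hpm.le]
    have e1 : ∀ a : Fin p, Bstar i (Fin.castLE hpm.le a) * G (Fin.castLE hpm.le a) j
        = Bbar i a * Bbar⁻¹ a j := by
      intro a
      rw [hG, hBbar]
      simp [Matrix.of_apply, a.isLt]
    have e2 : ∀ b : Fin (m - p),
        Bstar i ⟨p + (b : ℕ), by omega⟩ * G ⟨p + (b : ℕ), by omega⟩ j = 0 := by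
      intro b
      have hb : ¬ ((p + (b : ℕ)) < p) := by omega
      rw [hG]
      simp [Matrix.of_apply, hb]
    rw [Finset.sum_congr rfl fun a _ => e1 a, Finset.sum_congr rfl fun b _ => e2 b]
    rw [Finset.sum_const_zero, add_zero, ← Matrix.mul_apply, hBbar1]
  have hrow : ∀ i (k : ℕ), k < d i → ∀ t, (C * Acl ^ k) i t = (C * A ^ k) i t := by
    intro i k
    induction k with
    | zero => intro _ t; simp
    | succ k ih =>
      intro hk t
      have hk' : k < d i := by omega
      rw [pow_succ, pow_succ, ← Matrix.mul_assoc, ← Matrix.mul_assoc,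
        Matrix.mul_apply, Matrix.mul_apply]
      have e : ∀ t' ∈ Finset.univ, (C * Acl ^ k) i t' * Acl t' t
          = (C * A ^ k) i t' * A t' t + (C * A ^ k) i t' * (B * F) t' t := fun t' _ => by
        rw [ih hk' t', hAcl, Matrix.add_apply, mul_add]
      rw [Finset.sum_congr rfl e, Finset.sum_add_distrib]
      have ez : ∑ t', (C * A ^ k) i t' * (B * F) t' t = 0 := by
        rw [← Matrix.mul_apply, ← Matrix.mul_assoc, Matrix.mul_apply]
        exact Finset.sum_eq_zero fun u _ => by rw [hsmall i k hk u, zero_mul]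
      rw [ez, add_zero]
  have hzero : ∀ i l, (C * Acl ^ d i) i l = 0 := by
    intro i l
    have hp : (C * Acl ^ d i) i l = ∑ t, (C * Acl ^ (d i - 1)) i t * Acl t l := by
      conv_lhs => rw [show d i = (d i - 1) + 1 from by have := hd1 i; omega]
      rw [pow_succ, ← Matrix.mul_assoc, Matrix.mul_apply]
    rw [hp]
    have e : ∀ t ∈ Finset.univ, (C * Acl ^ (d i - 1)) i t * Acl t l
        = (C * A ^ (d i - 1)) i t * A t l + (C * A ^ (d i - 1)) i t * (B * F) t l :=
      fun t _ => by
        rw [hrow i _ (by have := hd1 i; omega) t, hAcl, Matrix.add_apply, mul_add]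
    rw [Finset.sum_congr rfl e, Finset.sum_add_distrib]
    have t1 : ∑ t, (C * A ^ (d i - 1)) i t * A t l = Astar i l := by
      rw [← Matrix.mul_apply, Matrix.mul_assoc, ← pow_succ,
        show d i - 1 + 1 = d i from by have := hd1 i; omega, hAstar]
      rfl
    have t2 : ∑ t, (C * A ^ (d i - 1)) i t * (B * F) t l = (Bstar * F) i l := by
      rw [← Matrix.mul_apply, ← Matrix.mul_assoc, Matrix.mul_apply, Matrix.mul_apply]
      exact Finset.sum_congr rfl fun u _ => by rw [hBstar]; rfl
    rw [t1, t2, hBF]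
    simp
  have hlast : ∀ i j, (C * A ^ (d i - 1) * B * G) i j = (1 : Matrix (Fin p) (Fin p) ℝ) i j := by
    intro i j
    rw [← hBGmat, Matrix.mul_apply, Matrix.mul_apply]
    exact Finset.sum_congr rfl fun u _ => by rw [hBstar]; rfl
  have hdet := aux_isUnit_det_sIm Acl
  have hs1 := aux_stepI d C Acl hzero
  have hs2 := aux_stepII d hd1 C A Acl B G hrow hsmall hlast
  have hXne : (RatFunc.X : RatFunc ℝ) ≠ 0 := RatFunc.X_ne_zero
  have hC : toRat C = Matrix.diagonal (fun i => ((RatFunc.X : RatFunc ℝ) ^ d i)⁻¹) *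
      (Nmat d C Acl * sIm Acl) := by
    rw [hs1, ← Matrix.mul_assoc, Matrix.diagonal_mul_diagonal]
    have : (fun i => ((RatFunc.X : RatFunc ℝ) ^ d i)⁻¹ * RatFunc.X ^ d i)
        = fun _ => (1 : RatFunc ℝ) :=
      funext fun i => inv_mul_cancel₀ (pow_ne_zero _ hXne)
    rw [this, Matrix.diagonal_one, Matrix.one_mul]
  rw [hC]
  simp only [Matrix.mul_assoc]
  rw [← Matrix.mul_assoc (sIm Acl) (sIm Acl)⁻¹, Matrix.mul_nonsing_inv _ hdet,
    Matrix.one_mul, hs2, Matrix.mul_one]
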